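/- Let ι be a nonempty finite index set, ε > 0, α > 1, and u, u' : ι → ℝ with |u i − u' i| ≤ 1 for all i. Define p i = exp((ε/2)·u i) / Σ_j exp((ε/2)·u j) and q i = exp((ε/2)·u' i) / Σ_j exp((ε/2)·u' j). Then the Rényi divergence of order α between p and q satisfies (1/(α−1)) · log( Σ_i p i^α · q i^(1−α) ) ≤ α·ε²/8. (The exponential mechanism with sensitivity-1 utility and parameter ε/2 satisfies (ε²/8)-zCDP.) -/

import Mathlib

open Real

-- scalar Hoeffding: (1-c) + c e^h ≤ exp(c h + h²/8) for c ∈ [0,1]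
lemma hoeff_scalar (c h : ℝ) (hc0 : 0 ≤ c) (hc1 : c ≤ 1) :
    (1 - c) + c * Real.exp h ≤ Real.exp (c * h + h ^ 2 / 8) := by
  rcases eq_or_lt_of_le hc0 with h0 | h0
  · simp [← h0]; positivity
  rcases eq_or_lt_of_le hc1 with h1 | h1
  · subst h1
    simp only [sub_self, zero_add, one_mul]
    rw [Real.exp_le_exp]
    nlinarith [sq_nonneg h]
  -- 0 < c < 1
  have hD : ∀ x : ℝ, 0 < 1 - c + c * Real.exp x := fun x => by
    have := Real.exp_pos x; nlinarith
  set D : ℝ → ℝ := fun x => 1 - c + c * Real.exp x with hDdef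
  set G : ℝ → ℝ := fun x => c + x / 4 - c * Real.exp x / D x with hGdef
  set g : ℝ → ℝ := fun x => c * x + x ^ 2 / 8 - Real.log (D x) with hgdef
  have hDd : ∀ x, HasDerivAt D (c * Real.exp x) x := fun x => by
    exact ((Real.hasDerivAt_exp x).const_mul c).const_add (1 - c)
  have hgd : ∀ x, HasDerivAt g (G x) x := by
    intro x
    have hl : HasDerivAt (fun y => Real.log (D y)) (c * Real.exp x / D x) x :=
      (hDd x).log (ne_of_gt (hD x))
    have h1 : HasDerivAt (fun y : ℝ => c * y + y ^ 2 / 8) (c + x / 4) x := by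
      have := ((hasDerivAt_id x).const_mul c).add
        (((hasDerivAt_pow 2 x)).div_const 8)
      refine this.congr_deriv ?_
      norm_num
      ring
    exact h1.sub hl
  have hGd : ∀ x, HasDerivAt G (1 / 4 - c * (1 - c) * Real.exp x / (D x) ^ 2) x := by
    intro x
    have hq : HasDerivAt (fun y => c * Real.exp y / D y)
        ((c * Real.exp x * D x - c * Real.exp x * (c * Real.exp x)) / (D x) ^ 2) x :=
      ((Real.hasDerivAt_exp x).const_mul c).div (hDd x) (ne_of_gt (hD x))
    have h1 : HasDerivAt (fun y : ℝ => c + y / 4) (1 / 4) x := by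
      simpa using ((hasDerivAt_id x)).div_const 4 |>.const_add c
    have := h1.sub hq
    refine this.congr_deriv ?_
    have : D x = 1 - c + c * Real.exp x := rfl
    have := hD x
    field_simp
    ring
  have hGmono : Monotone G := by
    apply monotone_of_deriv_nonneg
    · exact fun x => (hGd x).differentiableAt
    · intro x
      rw [(hGd x).deriv]
      have hDx := hD x
      have hex := Real.exp_pos x
      rw [sub_nonneg, div_le_iff₀ (by positivity)]
      have hDx2 : D x = 1 - c + c * Real.exp x := rfl
      rw [hDx2]
      nlinarith [sq_nonneg ((1 - c) - c * Real.exp x)]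
  have hG0 : G 0 = 0 := by
    simp only [hGdef, hDdef]
    norm_num
  have hg0 : g 0 = 0 := by simp [hgdef, hDdef]
  have hgnn : 0 ≤ g h := by
    rcases le_total 0 h with hh | hh
    · have : MonotoneOn g (Set.Ici 0) := by
        apply monotoneOn_of_deriv_nonneg (convex_Ici 0)
        · exact Continuous.continuousOn (by
            fun_prop (disch := intro x; exact ne_of_gt (hD x)))
        · intro x hx
          exact ((hgd x).differentiableAt).differentiableWithinAt
        · intro x hx
          rw [(hgd x).deriv, ← hG0]
          exact hGmono (le_of_lt (by simpa using hx))
      have := this (Set.self_mem_Ici) (by exact hh) hh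
      linarith [hg0 ▸ this]
    · have : AntitoneOn g (Set.Iic 0) := by
        apply antitoneOn_of_deriv_nonpos (convex_Iic 0)
        · exact Continuous.continuousOn (by
            fun_prop (disch := intro x; exact ne_of_gt (hD x)))
        · intro x hx
          exact ((hgd x).differentiableAt).differentiableWithinAt
        · intro x hx
          rw [(hgd x).deriv, ← hG0]
          exact hGmono (le_of_lt (by simpa using hx))
      have := this (by exact hh) Set.self_mem_Iic hh
      linarith [hg0 ▸ this]
  have : Real.log (D h) ≤ c * h + h ^ 2 / 8 := by
    simp only [hgdef] at hgnn; linarith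
  calc (1 - c) + c * Real.exp h = D h := rfl
    _ = Real.exp (Real.log (D h)) := (Real.exp_log (hD h)).symm
    _ ≤ _ := Real.exp_le_exp.mpr this

lemma hoeff_sum {ι : Type*} [Fintype ι] (w X : ι → ℝ) (hw : ∀ i, 0 ≤ w i)
    (hw1 : ∑ i, w i = 1) (a b t : ℝ) (hXa : ∀ i, a ≤ X i) (hXb : ∀ i, X i ≤ b) :
    ∑ i, w i * Real.exp (t * X i) ≤
      Real.exp (t * (∑ i, w i * X i) + t ^ 2 * (b - a) ^ 2 / 8) := by
  have hne : Nonempty ι := by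
    by_contra h
    simp [not_nonempty_iff.mp h] at hw1
  obtain ⟨i0⟩ := hne
  have hab : a ≤ b := le_trans (hXa i0) (hXb i0)
  rcases eq_or_lt_of_le hab with heq | hab
  · subst heq
    have hX : ∀ i, X i = a := fun i => le_antisymm (hXb i) (hXa i)
    simp only [hX, sub_self]
    rw [← Finset.sum_mul, hw1, ← Finset.sum_mul, hw1]
    norm_num
  · set θ : ℝ := (∑ i, w i * X i - a) / (b - a) with hθ
    have hba : 0 < b - a := sub_pos.mpr hab
    have hμa : a ≤ ∑ i, w i * X i := by
      calc a = ∑ i, w i * a := by rw [← Finset.sum_mul, hw1, one_mul]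
        _ ≤ _ := Finset.sum_le_sum fun i _ =>
            mul_le_mul_of_nonneg_left (hXa i) (hw i)
    have hμb : ∑ i, w i * X i ≤ b := by
      calc ∑ i, w i * X i ≤ ∑ i, w i * b := Finset.sum_le_sum fun i _ =>
            mul_le_mul_of_nonneg_left (hXb i) (hw i)
        _ = b := by rw [← Finset.sum_mul, hw1, one_mul]
    have hθ0 : 0 ≤ θ := div_nonneg (by linarith) hba.le
    have hθ1 : θ ≤ 1 := by
      rw [hθ, div_le_one hba]; linarith
    have hA : ∑ i, w i * (b - X i) = b - ∑ i, w i * X i := by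
      simp only [mul_sub, Finset.sum_sub_distrib, ← Finset.sum_mul, hw1, one_mul]
    have hB : ∑ i, w i * (X i - a) = ∑ i, w i * X i - a := by
      simp only [mul_sub, Finset.sum_sub_distrib, ← Finset.sum_mul, hw1, one_mul]
    have step1 : ∀ i, Real.exp (t * X i) ≤
        (b - X i) / (b - a) * Real.exp (t * a) + (X i - a) / (b - a) * Real.exp (t * b) := by
      intro i
      have hs0 : 0 ≤ (X i - a) / (b - a) := div_nonneg (by linarith [hXa i]) hba.le
      have hs0' : 0 ≤ (b - X i) / (b - a) := div_nonneg (by linarith [hXb i]) hba.le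
      have hsum : (b - X i) / (b - a) + (X i - a) / (b - a) = 1 := by
        field_simp
        ring
      have := convexOn_exp.2 (Set.mem_univ (t * a)) (Set.mem_univ (t * b)) hs0' hs0 hsum
      simp only [smul_eq_mul] at this
      rw [show t * X i = (b - X i) / (b - a) * (t * a) + (X i - a) / (b - a) * (t * b) by
        field_simp; ring]
      exact this
    calc ∑ i, w i * Real.exp (t * X i)
        ≤ ∑ i, w i * ((b - X i) / (b - a) * Real.exp (t * a)
            + (X i - a) / (b - a) * Real.exp (t * b)) :=
          Finset.sum_le_sum fun i _ => mul_le_mul_of_nonneg_left (step1 i) (hw i)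
      _ = (1 - θ) * Real.exp (t * a) + θ * Real.exp (t * b) := by
          have e1 : ∀ i, w i * ((b - X i) / (b - a) * Real.exp (t * a)
              + (X i - a) / (b - a) * Real.exp (t * b))
              = w i * (b - X i) * Real.exp (t * a) / (b - a)
                + w i * (X i - a) * Real.exp (t * b) / (b - a) := fun i => by ring
          simp only [e1, Finset.sum_add_distrib, ← Finset.sum_div, ← Finset.sum_mul, hA, hB]
          rw [hθ]
          field_simp
          ring
      _ = Real.exp (t * a) * ((1 - θ) + θ * Real.exp (t * (b - a))) := by
          rw [show t * (b - a) = t * b - t * a by ring, Real.exp_sub]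
          field_simp
      _ ≤ Real.exp (t * a) * Real.exp (θ * (t * (b - a)) + (t * (b - a)) ^ 2 / 8) :=
          mul_le_mul_of_nonneg_left (hoeff_scalar θ _ hθ0 hθ1) (Real.exp_pos _).le
      _ ≤ _ := by
          rw [← Real.exp_add, Real.exp_le_exp]
          have hθba : θ * (b - a) = ∑ i, w i * X i - a := by
            rw [hθ]; field_simp
          have h1 : θ * (t * (b - a)) = t * (∑ i, w i * X i) - t * a := by
            linear_combination t * hθba
          have h2 : (t * (b - a)) ^ 2 = t ^ 2 * (b - a) ^ 2 := by ring
          linarith [h1, h2]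

theorem exponential_mechanism_zcdp {ι : Type*} [Fintype ι] [Nonempty ι]
    (ε α : ℝ) (hε : 0 < ε) (hα : 1 < α)
    (u u' : ι → ℝ) (hu : ∀ i, |u i - u' i| ≤ 1) :
    (1 / (α - 1)) *
        Real.log (∑ i,
          (Real.exp (ε / 2 * u i) / (∑ j, Real.exp (ε / 2 * u j))) ^ α *
            (Real.exp (ε / 2 * u' i) / (∑ j, Real.exp (ε / 2 * u' j))) ^ (1 - α)) ≤
      α * ε ^ 2 / 8 := by
  set S : ℝ := ∑ j, Real.exp (ε / 2 * u j) with hSdef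
  set S' : ℝ := ∑ j, Real.exp (ε / 2 * u' j) with hS'def
  have hS : 0 < S := Finset.sum_pos (fun i _ => Real.exp_pos _) Finset.univ_nonempty
  have hS' : 0 < S' := Finset.sum_pos (fun i _ => Real.exp_pos _) Finset.univ_nonempty
  set p : ι → ℝ := fun i => Real.exp (ε / 2 * u i) / S with hpdef
  set q : ι → ℝ := fun i => Real.exp (ε / 2 * u' i) / S' with hqdef
  have hp : ∀ i, 0 < p i := fun i => div_pos (Real.exp_pos _) hS
  have hq : ∀ i, 0 < q i := fun i => div_pos (Real.exp_pos _) hS'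
  have hp1 : ∑ i, p i = 1 := by
    rw [hpdef, ← Finset.sum_div, ← hSdef, div_self hS.ne']
  have hq1 : ∑ i, q i = 1 := by
    rw [hqdef, ← Finset.sum_div, ← hS'def, div_self hS'.ne']
  set X : ι → ℝ := fun i => Real.log (p i) - Real.log (q i) with hXdef
  have hXval : ∀ i, X i = ε / 2 * (u i - u' i) + (Real.log S' - Real.log S) := by
    intro i
    rw [hXdef]
    simp only [hpdef, hqdef]
    rw [Real.log_div (Real.exp_ne_zero _) hS.ne', Real.log_div (Real.exp_ne_zero _) hS'.ne',
      Real.log_exp, Real.log_exp]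
    ring
  set a : ℝ := (Real.log S' - Real.log S) - ε / 2 with hadef
  set b : ℝ := (Real.log S' - Real.log S) + ε / 2 with hbdef
  have habs : ∀ i, |ε / 2 * (u i - u' i)| ≤ ε / 2 := by
    intro i
    rw [abs_mul, abs_of_pos (by positivity : (0:ℝ) < ε / 2)]
    calc ε / 2 * |u i - u' i| ≤ ε / 2 * 1 :=
          mul_le_mul_of_nonneg_left (hu i) (by positivity)
      _ = ε / 2 := mul_one _
  have hXa : ∀ i, a ≤ X i := fun i => by
    have := (abs_le.mp (habs i)).1
    rw [hXval i, hadef]; linarith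
  have hXb : ∀ i, X i ≤ b := fun i => by
    have := (abs_le.mp (habs i)).2
    rw [hXval i, hbdef]; linarith
  have hba : b - a = ε := by rw [hadef, hbdef]; ring
  set μ : ℝ := ∑ i, p i * X i with hμdef
  -- key identity
  have key : ∀ i, p i ^ α * q i ^ (1 - α) = p i * Real.exp ((α - 1) * X i) := by
    intro i
    calc p i ^ α * q i ^ (1 - α)
        = Real.exp (Real.log (p i) * α + Real.log (q i) * (1 - α)) := by
          rw [Real.rpow_def_of_pos (hp i), Real.rpow_def_of_pos (hq i), Real.exp_add]
      _ = Real.exp (Real.log (p i)) *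
            Real.exp ((α - 1) * (Real.log (p i) - Real.log (q i))) := by
          rw [← Real.exp_add]; congr 1; ring
      _ = p i * Real.exp ((α - 1) * X i) := by rw [Real.exp_log (hp i), hXdef]
  have hgoal : (∑ i, p i ^ α * q i ^ (1 - α)) = ∑ i, p i * Real.exp ((α - 1) * X i) :=
    Finset.sum_congr rfl fun i _ => key i
  -- bound on μ
  have hμ : μ ≤ ε ^ 2 / 8 := by
    have hexp : ∀ i, p i * Real.exp ((-1) * X i) = q i := by
      intro i
      rw [hXdef]
      have : (-1 : ℝ) * (Real.log (p i) - Real.log (q i))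
          = Real.log (q i) - Real.log (p i) := by ring
      rw [this, Real.exp_sub, Real.exp_log (hp i), Real.exp_log (hq i)]
      field_simp
      rw [mul_div_cancel_left₀ _ (hp i).ne']
    have H2 := hoeff_sum p X (fun i => (hp i).le) hp1 a b (-1) hXa hXb
    rw [hba] at H2
    have hone : (1 : ℝ) ≤ Real.exp ((-1) * μ + (-1) ^ 2 * ε ^ 2 / 8) := by
      calc (1 : ℝ) = ∑ i, q i := hq1.symm
        _ = ∑ i, p i * Real.exp ((-1) * X i) := (Finset.sum_congr rfl fun i _ => (hexp i).symm)
        _ ≤ _ := H2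
    have := Real.one_le_exp_iff.mp hone
    nlinarith [this]
  -- main bound
  have H1 := hoeff_sum p X (fun i => (hp i).le) hp1 a b (α - 1) hXa hXb
  rw [hba] at H1
  have hpos : 0 < ∑ i, p i * Real.exp ((α - 1) * X i) :=
    Finset.sum_pos (fun i _ => by positivity) Finset.univ_nonempty
  have hlog : Real.log (∑ i, p i * Real.exp ((α - 1) * X i)) ≤
      (α - 1) * μ + (α - 1) ^ 2 * ε ^ 2 / 8 := by
    rw [Real.log_le_iff_le_exp hpos]
    exact H1
  have hα1 : 0 < α - 1 := by linarith
  have step : (1 / (α - 1)) * Real.log (∑ i, p i * Real.exp ((α - 1) * X i)) ≤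
      μ + (α - 1) * ε ^ 2 / 8 := by
    have := mul_le_mul_of_nonneg_left hlog (by positivity : (0:ℝ) ≤ 1 / (α - 1))
    calc (1 / (α - 1)) * Real.log (∑ i, p i * Real.exp ((α - 1) * X i))
        ≤ (1 / (α - 1)) * ((α - 1) * μ + (α - 1) ^ 2 * ε ^ 2 / 8) := this
      _ = μ + (α - 1) * ε ^ 2 / 8 := by field_simp
  calc (1 / (α - 1)) * Real.log (∑ i, p i ^ α * q i ^ (1 - α))
      = (1 / (α - 1)) * Real.log (∑ i, p i * Real.exp ((α - 1) * X i)) := by rw [hgoal]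
    _ ≤ μ + (α - 1) * ε ^ 2 / 8 := step
    _ ≤ α * ε ^ 2 / 8 := by linarith
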